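/- arXiv:2005.02718 — 2 statements merged into one kernel-verified Lean document; each statement's English description precedes it below -/
import Mathlib

section
/- Fix i ∈ {1,…,d}. Let f : ℝ^d → ℝ be a bounded C¹ function whose partial derivative ∂f/∂y_i is also bounded. If the limit lim_{R→∞} ⨍_{B_R} (∂f/∂y_i)(y) dy exists, then it equals 0. In particular, if A is an algebra with mean value on ℝ^d and f ∈ A is C¹ with ∂f/∂y_i ∈ A, then M(∂f/∂y_i) = 0. -/
open MeasureTheory Filter Topology

noncomputable section

/-- Euclidean space `ℝ^d`. -/
abbrev E (d : ℕ) := EuclideanSpace ℝ (Fin d)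

/-- Average of a function over the ball of radius `R` centered at the origin. -/
noncomputable def ballAvg {d : ℕ} (u : E d → ℝ) (R : ℝ) : ℝ :=
  ⨍ y in Metric.ball (0 : E d) R, u y

/-- `u` has mean value `m` : the ball averages converge to `m` as `R → ∞`. -/
def HasMeanValue {d : ℕ} (u : E d → ℝ) (m : ℝ) : Prop :=
  Tendsto (ballAvg u) atTop (𝓝 m)

/-- The mean value `M(u)` (junk value if the limit does not exist). -/
noncomputable def meanValue {d : ℕ} (u : E d → ℝ) : ℝ :=
  limUnder atTop (ballAvg u)

open Metric

section Aux

variable {d : ℕ}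

lemma contIntOn (u : E d → ℝ) (hu : Continuous u) (x : E d) (R : ℝ) :
    IntegrableOn u (ball x R) volume :=
  ((hu.continuousOn).integrableOn_compact (isCompact_closedBall x R)).mono_set
    ball_subset_closedBall

lemma integral_ball_translate (u : E d → ℝ) (a : E d) (R : ℝ) :
    ∫ y in ball (0 : E d) R, u (y + a) = ∫ y in ball a R, u y := by
  have hset : (fun x : E d => x + a) ⁻¹' ball a R = ball (0 : E d) R := by
    ext y
    simp [Metric.mem_ball, dist_eq_norm]
  have h := (measurePreserving_add_right (volume : Measure (E d)) a).setIntegral_preimage_emb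
    (MeasurableEquiv.addRight a).measurableEmbedding u (ball a R)
  rw [hset] at h
  exact h

lemma abs_ballAvg_le (u : E d → ℝ) {C : ℝ} (hC : ∀ x, |u x| ≤ C) (hu : Continuous u) (R : ℝ) :
    |ballAvg u R| ≤ C := by
  have hC0 : 0 ≤ C := le_trans (abs_nonneg _) (hC 0)
  have hmeas : AEStronglyMeasurable u ((volume : Measure (E d)).restrict (ball 0 R)) :=
    hu.aestronglyMeasurable
  have h1 : ‖∫ y in ball (0 : E d) R, u y‖ ≤ C * (volume (ball (0 : E d) R)).toReal :=
    norm_setIntegral_le_of_norm_le_const (f := u) measure_ball_lt_top (fun x _ => hC x)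
  rw [ballAvg, setAverage_eq, smul_eq_mul, Measure.real, abs_mul, abs_inv,
    abs_of_nonneg ENNReal.toReal_nonneg]
  set t := (volume (ball (0 : E d) R)).toReal with ht
  have ht0 : 0 ≤ t := ENNReal.toReal_nonneg
  calc t⁻¹ * |∫ y in ball (0 : E d) R, u y| ≤ t⁻¹ * (C * t) :=
        mul_le_mul_of_nonneg_left h1 (inv_nonneg.2 ht0)
    _ ≤ C := by
        rcases eq_or_ne t 0 with h | h
        · simp [h, hC0]
        · rw [mul_comm C t, ← mul_assoc, inv_mul_cancel₀ h, one_mul]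

lemma integral_ball_sub_ball (u : E d → ℝ) (hu : Continuous u) {C : ℝ} (hC : ∀ x, |u x| ≤ C)
    (a : E d) {R : ℝ} (haR : ‖a‖ ≤ R) :
    |(∫ y in ball a R, u y) - ∫ y in ball (0 : E d) R, u y| ≤
      2 * C * ((volume (ball (0 : E d) (R + ‖a‖))).toReal -
        (volume (ball (0 : E d) (R - ‖a‖))).toReal) := by
  have hC0 : 0 ≤ C := le_trans (abs_nonneg _) (hC 0)
  set S := ball a R with hS
  set T := ball (0 : E d) R with hT
  set D := ball (0 : E d) (R + ‖a‖) \ ball (0 : E d) (R - ‖a‖) with hD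
  have hSD : S \ T ⊆ D := by
    rintro y ⟨hyS, hyT⟩
    rw [hS] at hyS; rw [hT] at hyT
    constructor
    · have : ‖y - a‖ < R := by simpa [mem_ball, dist_eq_norm] using hyS
      have : ‖y‖ ≤ ‖y - a‖ + ‖a‖ := by
        simpa using norm_add_le (y - a) a
      simp only [mem_ball, dist_zero_right]
      linarith
    · intro hy
      have h1 : ‖y‖ < R - ‖a‖ := by simpa [mem_ball, dist_zero_right] using hy
      exact hyT (by simp only [mem_ball, dist_zero_right]; linarith [norm_nonneg a])
  have hTD : T \ S ⊆ D := by
    rintro y ⟨hyT, hyS⟩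
    rw [hS] at hyS; rw [hT] at hyT
    have h1 : ‖y‖ < R := by simpa [mem_ball, dist_zero_right] using hyT
    constructor
    · simp only [mem_ball, dist_zero_right]
      linarith [norm_nonneg a]
    · intro hy
      have h2 : ‖y‖ < R - ‖a‖ := by simpa [mem_ball, dist_zero_right] using hy
      apply hyS
      have : ‖y - a‖ ≤ ‖y‖ + ‖a‖ := norm_sub_le y a
      simp only [mem_ball, dist_eq_norm]
      linarith
  have hDfin : volume D < ⊤ :=
    lt_of_le_of_lt (measure_mono Set.diff_subset) measure_ball_lt_top
  have hDval : (volume D).toReal = (volume (ball (0 : E d) (R + ‖a‖))).toReal -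
      (volume (ball (0 : E d) (R - ‖a‖))).toReal := by
    rw [hD, measure_diff (ball_subset_ball (by linarith [norm_nonneg a]))
      measurableSet_ball.nullMeasurableSet measure_ball_lt_top.ne]
    rw [ENNReal.toReal_sub_of_le (measure_mono (ball_subset_ball (by linarith [norm_nonneg a])))
      measure_ball_lt_top.ne]
  have hIS : IntegrableOn u S volume := contIntOn u hu a R
  have hIT : IntegrableOn u T volume := contIntOn u hu 0 R
  have hsplitS : ∫ y in S, u y = (∫ y in S ∩ T, u y) + ∫ y in S \ T, u y :=
    (integral_inter_add_diff measurableSet_ball hIS).symm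
  have hsplitT : ∫ y in T, u y = (∫ y in T ∩ S, u y) + ∫ y in T \ S, u y :=
    (integral_inter_add_diff measurableSet_ball hIT).symm
  have hbound : ∀ (W : Set (E d)), W ⊆ D → MeasurableSet W →
      |∫ y in W, u y| ≤ C * (volume D).toReal := by
    intro W hW hWm
    have hWfin : volume W < ⊤ := lt_of_le_of_lt (measure_mono hW) hDfin
    have := norm_setIntegral_le_of_norm_le_const (μ := volume) (s := W) (f := u) hWfin
      (fun x _ => hC x)
    exact le_trans this (mul_le_mul_of_nonneg_left
      (ENNReal.toReal_mono hDfin.ne (measure_mono hW)) hC0)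
  have h1 := hbound (S \ T) hSD (measurableSet_ball.diff measurableSet_ball)
  have h2 := hbound (T \ S) hTD (measurableSet_ball.diff measurableSet_ball)
  have : (∫ y in S, u y) - ∫ y in T, u y = (∫ y in S \ T, u y) - ∫ y in T \ S, u y := by
    rw [hsplitS, hsplitT, Set.inter_comm S T]; ring
  rw [this, ← hDval]
  calc |(∫ y in S \ T, u y) - ∫ y in T \ S, u y|
      ≤ |∫ y in S \ T, u y| + |∫ y in T \ S, u y| := abs_sub _ _
    _ ≤ C * (volume D).toReal + C * (volume D).toReal := add_le_add h1 h2
    _ = 2 * C * (volume D).toReal := by ring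

lemma tendsto_ballAvg_translate_sub [Nontrivial (E d)] (u : E d → ℝ) (hu : Continuous u)
    {C : ℝ} (hC : ∀ x, |u x| ≤ C) (a : E d) :
    Tendsto (fun R => ballAvg (fun y => u (y + a)) R - ballAvg u R) atTop (𝓝 0) := by
  have hC0 : 0 ≤ C := le_trans (abs_nonneg _) (hC 0)
  set c := ‖a‖ with hc
  have hc0 : 0 ≤ c := norm_nonneg a
  set κ := (volume (ball (0 : E d) 1)).toReal with hκdef
  have hκpos : 0 < κ := by
    rw [hκdef]
    exact ENNReal.toReal_pos (measure_ball_pos volume 0 one_pos).ne' measure_ball_lt_top.ne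
  have hdim : Module.finrank ℝ (E d) = d := finrank_euclideanSpace_fin
  have hvol : ∀ {r : ℝ}, 0 ≤ r → (volume (ball (0 : E d) r)).toReal = r ^ d * κ := by
    intro r hr
    rw [Measure.addHaar_ball _ _ hr, hdim, ENNReal.toReal_mul,
      ENNReal.toReal_ofReal (pow_nonneg hr d)]
  -- the bound function
  have hbnd : Tendsto (fun R : ℝ => 2 * C * ((1 + c / R) ^ d - (1 - c / R) ^ d)) atTop
      (𝓝 (2 * C * ((1 + 0) ^ d - (1 - 0) ^ d))) := by
    have h0 : Tendsto (fun R : ℝ => c / R) atTop (𝓝 0) :=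
      tendsto_const_nhds.div_atTop tendsto_id
    exact (((tendsto_const_nhds.add h0).pow d).sub
      ((tendsto_const_nhds.sub h0).pow d)).const_mul _
  have hbnd0 : Tendsto (fun R : ℝ => 2 * C * ((1 + c / R) ^ d - (1 - c / R) ^ d)) atTop
      (𝓝 0) := by simpa using hbnd
  apply squeeze_zero_norm' _ hbnd0
  filter_upwards [eventually_ge_atTop (max 1 c)] with R hR
  have hR1 : (1 : ℝ) ≤ R := le_trans (le_max_left _ _) hR
  have hRc : c ≤ R := le_trans (le_max_right _ _) hR
  have hR0 : 0 < R := lt_of_lt_of_le one_pos hR1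
  have hRd : (0 : ℝ) < R ^ d * κ := mul_pos (pow_pos hR0 d) hκpos
  -- rewrite the averages
  have havg1 : ballAvg (fun y => u (y + a)) R =
      (R ^ d * κ)⁻¹ * ∫ y in ball a R, u y := by
    rw [ballAvg, setAverage_eq, smul_eq_mul, Measure.real, hvol hR0.le, integral_ball_translate]
  have havg2 : ballAvg u R = (R ^ d * κ)⁻¹ * ∫ y in ball (0 : E d) R, u y := by
    rw [ballAvg, setAverage_eq, smul_eq_mul, Measure.real, hvol hR0.le]
  rw [havg1, havg2, ← mul_sub, Real.norm_eq_abs, abs_mul, abs_inv, abs_of_pos hRd]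
  have hest := integral_ball_sub_ball u hu hC a hRc
  rw [hvol (by linarith : (0:ℝ) ≤ R + c), hvol (by linarith : (0:ℝ) ≤ R - c)] at hest
  calc (R ^ d * κ)⁻¹ * |(∫ y in ball a R, u y) - ∫ y in ball (0 : E d) R, u y|
      ≤ (R ^ d * κ)⁻¹ * (2 * C * ((R + c) ^ d * κ - (R - c) ^ d * κ)) :=
        mul_le_mul_of_nonneg_left hest (inv_nonneg.2 hRd.le)
    _ = 2 * C * ((1 + c / R) ^ d - (1 - c / R) ^ d) := by
        have h1 : (1 + c / R) = (R + c) / R := by field_simp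
        have h2 : (1 - c / R) = (R - c) / R := by field_simp
        rw [h1, h2, div_pow, div_pow]
        field_simp

lemma ftc_line {f : E d → ℝ} (hf : ContDiff ℝ 1 f) (e : E d) (y : E d) :
    f (y + e) - f y = ∫ s in (0:ℝ)..1, fderiv ℝ f (y + s • e) e := by
  have gcont : Continuous fun x => fderiv ℝ f x e :=
    (hf.continuous_fderiv one_ne_zero).clm_apply continuous_const
  have hd : ∀ s ∈ Set.uIcc (0:ℝ) 1,
      HasDerivAt (fun t : ℝ => f (y + t • e)) (fderiv ℝ f (y + s • e) e) s := by
    intro s _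
    have hline : HasDerivAt (fun t : ℝ => y + t • e) e s := by
      simpa using ((hasDerivAt_id s).smul_const e).const_add y
    exact ((hf.differentiable one_ne_zero) (y + s • e)).hasFDerivAt.comp_hasDerivAt s hline
  have hint : IntervalIntegrable (fun s : ℝ => fderiv ℝ f (y + s • e) e) volume 0 1 :=
    (gcont.comp (by fun_prop)).intervalIntegrable 0 1
  have := intervalIntegral.integral_eq_sub_of_hasDerivAt hd hint
  rw [this]
  simp

end Aux

/-- An algebra with mean value on `ℝ^d`: a closed subalgebra of BUC(ℝ^d) containing the
constants, translation invariant, all of whose elements possess a mean value. -/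
structure AlgebraWMV (d : ℕ) where
  carrier : Set (E d → ℝ)
  bdd : ∀ u ∈ carrier, ∃ C : ℝ, ∀ x, |u x| ≤ C
  uc : ∀ u ∈ carrier, UniformContinuous u
  const_mem : ∀ c : ℝ, (fun _ => c) ∈ carrier
  add_mem : ∀ u ∈ carrier, ∀ v ∈ carrier, u + v ∈ carrier
  mul_mem : ∀ u ∈ carrier, ∀ v ∈ carrier, u * v ∈ carrier
  smul_mem : ∀ (c : ℝ), ∀ u ∈ carrier, c • u ∈ carrier
  translate_mem : ∀ u ∈ carrier, ∀ a : E d, (fun x => u (x + a)) ∈ carrier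
  closed' : ∀ (u : E d → ℝ) (g : ℕ → E d → ℝ), (∀ n, g n ∈ carrier) →
      TendstoUniformly g u atTop → u ∈ carrier
  mean_exists : ∀ u ∈ carrier, ∃ m : ℝ, HasMeanValue u m

/-- a bounded `C¹` function with bounded `i`-th partial derivative has
vanishing mean value of that partial derivative, whenever the mean value exists.
In particular, for `f` in an algebra with mean value `A`, `C¹` with `∂f/∂y_i ∈ A`,
one has `M(∂f/∂y_i) = 0`. -/
theorem meanValue_partialDeriv_eq_zero {d : ℕ} (i : Fin d) (f : E d → ℝ)
    (hfb : ∃ C : ℝ, ∀ y, |f y| ≤ C) (hf : ContDiff ℝ 1 f)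
    (hdb : ∃ C : ℝ, ∀ y, |fderiv ℝ f y (EuclideanSpace.single i 1)| ≤ C)
    (L : ℝ) (hL : HasMeanValue (fun y => fderiv ℝ f y (EuclideanSpace.single i 1)) L) :
    L = 0 ∧
      ∀ A : AlgebraWMV d, f ∈ A.carrier →
        (fun y => fderiv ℝ f y (EuclideanSpace.single i 1)) ∈ A.carrier →
        ∀ m : ℝ, HasMeanValue (fun y => fderiv ℝ f y (EuclideanSpace.single i 1)) m →
          m = 0 := by

  have hL0 : L = 0 := by
    obtain ⟨Cf, hCf⟩ := hfb
    obtain ⟨Cg, hCg⟩ := hdb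
    haveI : Nontrivial (E d) :=
      ⟨EuclideanSpace.single i 1, 0, by intro h; simpa using congrArg (· i) h⟩
    set e : E d := EuclideanSpace.single i 1 with he
    set g : E d → ℝ := fun y => fderiv ℝ f y e with hgdef
    have gcont : Continuous g := (hf.continuous_fderiv one_ne_zero).clm_apply continuous_const
    have fcont : Continuous f := hf.continuous
    have key : ∀ R : ℝ, 0 < R →
        ballAvg (fun y => f (y + e)) R - ballAvg f R
          = ∫ s in (0:ℝ)..1, ballAvg (fun y => g (y + s • e)) R := by
      intro R hR
      haveI hfin : IsFiniteMeasure ((volume : Measure (E d)).restrict (ball (0:E d) R)) :=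
        ⟨by rw [Measure.restrict_apply_univ]; exact measure_ball_lt_top⟩
      haveI hfin2 : IsFiniteMeasure ((volume : Measure ℝ).restrict (Set.Ioc (0:ℝ) 1)) :=
        ⟨by rw [Measure.restrict_apply_univ]; simp⟩
      have hIf : IntegrableOn f (ball (0:E d) R) volume := contIntOn f fcont 0 R
      have hIf' : IntegrableOn (fun y => f (y + e)) (ball (0:E d) R) volume :=
        contIntOn _ (fcont.comp (by fun_prop)) 0 R
      have swap : ∫ y in ball (0:E d) R, (∫ s in (0:ℝ)..1, g (y + s • e))
          = ∫ s in (0:ℝ)..1, ∫ y in ball (0:E d) R, g (y + s • e) := by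
        simp_rw [intervalIntegral.integral_of_le (zero_le_one' ℝ)]
        apply MeasureTheory.integral_integral_swap
        refine ⟨(gcont.comp ?_).aestronglyMeasurable, ?_⟩
        · exact continuous_fst.add (continuous_snd.smul continuous_const)
        · exact HasFiniteIntegral.of_bounded (C := Cg)
            (Filter.Eventually.of_forall fun p => by
              simpa [Real.norm_eq_abs, Function.uncurry, hgdef] using hCg (p.1 + p.2 • e))
      calc ballAvg (fun y => f (y + e)) R - ballAvg f R
          = (volume (ball (0:E d) R)).toReal⁻¹ *
              ((∫ y in ball (0:E d) R, f (y + e)) - ∫ y in ball (0:E d) R, f y) := by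
            rw [ballAvg, ballAvg, setAverage_eq, setAverage_eq, smul_eq_mul, smul_eq_mul, Measure.real, mul_sub]
        _ = (volume (ball (0:E d) R)).toReal⁻¹ *
              ∫ y in ball (0:E d) R, (f (y + e) - f y) := by
            rw [integral_sub hIf' hIf]
        _ = (volume (ball (0:E d) R)).toReal⁻¹ *
              ∫ y in ball (0:E d) R, (∫ s in (0:ℝ)..1, g (y + s • e)) := by
            congr 1
            exact setIntegral_congr_fun measurableSet_ball fun y _ => ftc_line hf e y
        _ = ∫ s in (0:ℝ)..1, (volume (ball (0:E d) R)).toReal⁻¹ *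
              ∫ y in ball (0:E d) R, g (y + s • e) := by
            rw [swap, ← intervalIntegral.integral_const_mul]
        _ = ∫ s in (0:ℝ)..1, ballAvg (fun y => g (y + s • e)) R := by
            refine intervalIntegral.integral_congr fun s _ => ?_
            rw [ballAvg, setAverage_eq, smul_eq_mul, Measure.real]
    have hlhs : Tendsto (fun R => ballAvg (fun y => f (y + e)) R - ballAvg f R) atTop (𝓝 0) :=
      tendsto_ballAvg_translate_sub f fcont hCf e
    have hptwise : ∀ s : ℝ, Tendsto (fun R => ballAvg (fun y => g (y + s • e)) R) atTop (𝓝 L) := by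
      intro s
      have h1 := tendsto_ballAvg_translate_sub g gcont hCg (s • e)
      have h2 : Tendsto (ballAvg g) atTop (𝓝 L) := hL
      have h3 := h1.add h2
      simp only [sub_add_cancel, zero_add] at h3
      exact h3
    have hcontR : ∀ R : ℝ, Continuous fun s : ℝ => ballAvg (fun y => g (y + s • e)) R := by
      intro R
      haveI : IsFiniteMeasure ((volume : Measure (E d)).restrict (ball (0:E d) R)) :=
        ⟨by rw [Measure.restrict_apply_univ]; exact measure_ball_lt_top⟩
      have hc : Continuous fun s : ℝ => ∫ y in ball (0:E d) R, g (y + s • e) := by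
        apply continuous_of_dominated (bound := fun _ => Cg)
        · exact fun s => (gcont.comp (by fun_prop)).aestronglyMeasurable
        · exact fun s => Filter.Eventually.of_forall fun y => by
            simpa [Real.norm_eq_abs] using hCg (y + s • e)
        · exact integrable_const _
        · exact Filter.Eventually.of_forall fun y =>
            gcont.comp (by fun_prop : Continuous fun s : ℝ => y + s • e)
      simp only [ballAvg, setAverage_eq, smul_eq_mul]
      exact continuous_const.mul hc
    have hrhs : Tendsto (fun R => ∫ s in (0:ℝ)..1, ballAvg (fun y => g (y + s • e)) R) atTop
        (𝓝 (∫ s in (0:ℝ)..1, (L:ℝ))) := by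
      apply intervalIntegral.tendsto_integral_filter_of_dominated_convergence (bound := fun _ => Cg)
      · exact Filter.Eventually.of_forall fun R => (hcontR R).aestronglyMeasurable
      · exact Filter.Eventually.of_forall fun R => Filter.Eventually.of_forall fun s _ => by
          simpa [Real.norm_eq_abs] using
            abs_ballAvg_le _ (fun x => hCg (x + s • e)) (gcont.comp (by fun_prop)) R
      · exact intervalIntegrable_const
      · exact Filter.Eventually.of_forall fun s _ => hptwise s
    have hrhs' : Tendsto (fun R => ∫ s in (0:ℝ)..1, ballAvg (fun y => g (y + s • e)) R) atTop
        (𝓝 L) := by simpa using hrhs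
    have hlhs' : Tendsto (fun R => ∫ s in (0:ℝ)..1, ballAvg (fun y => g (y + s • e)) R) atTop
        (𝓝 0) := by
      apply hlhs.congr'
      filter_upwards [eventually_gt_atTop (0:ℝ)] with R hR using key R hR
    exact tendsto_nhds_unique hrhs' hlhs'
  exact ⟨hL0, fun A _ _ m hm => (tendsto_nhds_unique hm hL).trans hL0⟩
end
end

section
/- Let σ be a nonnegative bounded measurable kernel on ℝ^d × V × V satisfying the semi-detailed balance condition. Then the collision operator is dissipative: for almost every y ∈ ℝ^d and every measurable g : ℝ^d × V → ℝ with g(y,·) ∈ L²(V,μ), one has ∫_V g(y,v) Qg(y,v) dμ(v) ≤ 0. -/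
open MeasureTheory Filter Topology

noncomputable section

lemma dissip_aux {α : Type*} [MeasurableSpace α] (ν : Measure α) [IsFiniteMeasure ν]
    (s : α → α → ℝ) (hs : Measurable (fun p : α × α => s p.1 p.2))
    (hsnn : ∀ v w, 0 ≤ s v w) (C : ℝ) (hsb : ∀ v w, s v w ≤ C)
    (h : α → ℝ) (hh : Measurable h) (hh2 : MemLp h 2 ν)
    (hbal : ∀ᵐ v ∂ν, ∫ w, s v w ∂ν = ∫ w, s w v ∂ν) :
    ∫ v, h v * ∫ w, s v w * (h w - h v) ∂ν ∂ν ≤ 0 := by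
  have hsb' : ∃ C', ∀ p : α × α, ‖s p.1 p.2‖ ≤ C' := by
    refine ⟨max C 0, fun p => ?_⟩
    rw [Real.norm_eq_abs, abs_of_nonneg (hsnn _ _)]
    exact le_max_of_le_left (hsb _ _)
  have hsb'' : ∃ C', ∀ p : α × α, ‖s p.2 p.1‖ ≤ C' := by
    obtain ⟨C', hC'⟩ := hsb'
    exact ⟨C', fun p => hC' p.swap⟩
  have hs' : Measurable (fun p : α × α => s p.2 p.1) := hs.comp measurable_swap
  have h1 : Integrable h ν := hh2.integrable one_le_two
  have hsq : Integrable (fun v => h v ^ 2) ν := hh2.integrable_sq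
  -- integrability on the product
  have ihh : Integrable (fun p : α × α => h p.1 * h p.2) (ν.prod ν) := h1.mul_prod h1
  have isq1 : Integrable (fun p : α × α => h p.1 ^ 2) (ν.prod ν) := by
    have := hsq.mul_prod (integrable_const (1 : ℝ) (μ := ν))
    simpa using this
  have isq2 : Integrable (fun p : α × α => h p.2 ^ 2) (ν.prod ν) := by
    have := (integrable_const (1 : ℝ) (μ := ν)).mul_prod hsq
    simpa using this
  have iA : Integrable (fun p : α × α => s p.1 p.2 * (h p.1 * h p.2)) (ν.prod ν) :=
    ihh.bdd_mul (hs.aestronglyMeasurable) (ae_of_all _ hsb'.choose_spec)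
  have iB : Integrable (fun p : α × α => s p.1 p.2 * h p.1 ^ 2) (ν.prod ν) :=
    isq1.bdd_mul (hs.aestronglyMeasurable) (ae_of_all _ hsb'.choose_spec)
  have iB' : Integrable (fun p : α × α => s p.1 p.2 * h p.2 ^ 2) (ν.prod ν) :=
    isq2.bdd_mul (hs.aestronglyMeasurable) (ae_of_all _ hsb'.choose_spec)
  have iG : Integrable (fun p : α × α => s p.2 p.1 * h p.1 ^ 2) (ν.prod ν) :=
    isq1.bdd_mul (hs'.aestronglyMeasurable) (ae_of_all _ hsb''.choose_spec)
  have iF : Integrable (fun p : α × α => h p.1 * (s p.1 p.2 * (h p.2 - h p.1))) (ν.prod ν) := by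
    have : (fun p : α × α => h p.1 * (s p.1 p.2 * (h p.2 - h p.1)))
        = fun p : α × α => s p.1 p.2 * (h p.1 * h p.2) - s p.1 p.2 * h p.1 ^ 2 := by
      funext p; ring
    rw [this]
    exact iA.sub iB
  -- rewrite the iterated integral
  have step1 : ∫ v, h v * ∫ w, s v w * (h w - h v) ∂ν ∂ν
      = ∫ p, h p.1 * (s p.1 p.2 * (h p.2 - h p.1)) ∂(ν.prod ν) := by
    rw [MeasureTheory.integral_prod _ iF]
    congr 1; funext v
    rw [← integral_const_mul]
  have step2 : ∫ p, h p.1 * (s p.1 p.2 * (h p.2 - h p.1)) ∂(ν.prod ν)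
      = (∫ p, s p.1 p.2 * (h p.1 * h p.2) ∂(ν.prod ν))
        - ∫ p, s p.1 p.2 * h p.1 ^ 2 ∂(ν.prod ν) := by
    rw [← integral_sub iA iB]
    congr 1; funext p; ring
  -- balance: ∫ B = ∫ G
  have hBG : ∫ p, s p.1 p.2 * h p.1 ^ 2 ∂(ν.prod ν)
      = ∫ p, s p.2 p.1 * h p.1 ^ 2 ∂(ν.prod ν) := by
    rw [MeasureTheory.integral_prod _ iB, MeasureTheory.integral_prod _ iG]
    apply integral_congr_ae
    filter_upwards [hbal] with v hv
    simp only [integral_mul_const, hv]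
  -- swap: ∫ G = ∫ B'
  have hGB' : ∫ p, s p.2 p.1 * h p.1 ^ 2 ∂(ν.prod ν)
      = ∫ p, s p.1 p.2 * h p.2 ^ 2 ∂(ν.prod ν) := by
    rw [← integral_prod_swap (fun p : α × α => s p.1 p.2 * h p.2 ^ 2)]
    rfl
  -- nonnegativity
  have hnn : 0 ≤ ∫ p, s p.1 p.2 * (h p.1 - h p.2) ^ 2 ∂(ν.prod ν) :=
    integral_nonneg fun p => mul_nonneg (hsnn _ _) (sq_nonneg _)
  have hsplit : ∫ p, s p.1 p.2 * (h p.1 - h p.2) ^ 2 ∂(ν.prod ν)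
      = (∫ p, s p.1 p.2 * h p.1 ^ 2 ∂(ν.prod ν))
        + (∫ p, s p.1 p.2 * h p.2 ^ 2 ∂(ν.prod ν))
        - 2 * ∫ p, s p.1 p.2 * (h p.1 * h p.2) ∂(ν.prod ν) := by
    have iSum : Integrable (fun p : α × α =>
        s p.1 p.2 * h p.1 ^ 2 + s p.1 p.2 * h p.2 ^ 2) (ν.prod ν) := iB.add iB'
    have i2A : Integrable (fun p : α × α =>
        2 * (s p.1 p.2 * (h p.1 * h p.2))) (ν.prod ν) := iA.const_mul 2
    have e : ∫ p, s p.1 p.2 * (h p.1 - h p.2) ^ 2 ∂(ν.prod ν)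
        = ∫ p, (s p.1 p.2 * h p.1 ^ 2 + s p.1 p.2 * h p.2 ^ 2)
            - 2 * (s p.1 p.2 * (h p.1 * h p.2)) ∂(ν.prod ν) := by
      congr 1; funext p; ring
    rw [e, integral_sub iSum i2A, integral_add iB iB', integral_const_mul]
  rw [step1, step2]
  linarith [hnn, hsplit, hBG, hGB']

/-- The collision operator `Qf(y,v) = ∫_V σ(y,v,w)(f(y,w) − f(y,v)) dμ(w)`. -/
noncomputable def Qop {d : ℕ} (μ : Measure (E d)) (V : Set (E d))
    (σ : E d → E d → E d → ℝ) (f : E d → E d → ℝ) (y v : E d) : ℝ :=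
  ∫ w in V, σ y v w * (f y w - f y v) ∂μ

/-- The adjoint collision operator `Q*φ(y,v) = ∫_V σ(y,w,v)(φ(y,w) − φ(y,v)) dμ(w)`. -/
noncomputable def Qadj {d : ℕ} (μ : Measure (E d)) (V : Set (E d))
    (σ : E d → E d → E d → ℝ) (φ : E d → E d → ℝ) (y v : E d) : ℝ :=
  ∫ w in V, σ y w v * (φ y w - φ y v) ∂μ

/-- under the semi-detailed balance condition the collision operator is
dissipative: `∫_V g Qg dμ ≤ 0` for a.e. `y`. -/
theorem collision_dissipative {d : ℕ} (V : Set (E d)) (hV : IsCompact V)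
    (μ : Measure (E d)) [IsFiniteMeasure μ] (hμV : μ Vᶜ = 0)
    (σ : E d → E d → E d → ℝ)
    (hσmeas : Measurable fun p : E d × E d × E d => σ p.1 p.2.1 p.2.2)
    (hσnn : ∀ y v w, 0 ≤ σ y v w) (hσbdd : ∃ C : ℝ, ∀ y v w, σ y v w ≤ C)
    (hbal : ∀ᵐ y : E d, ∀ᵐ v ∂(μ.restrict V),
        ∫ w in V, σ y v w ∂μ = ∫ w in V, σ y w v ∂μ) :
    ∀ᵐ y : E d, ∀ g : E d → E d → ℝ,
      Measurable (fun p : E d × E d => g p.1 p.2) →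
      MemLp (g y) 2 (μ.restrict V) →
      ∫ v in V, g y v * Qop μ V σ g y v ∂μ ≤ 0 := by
  obtain ⟨C, hC⟩ := hσbdd
  filter_upwards [hbal] with y hy g hgmeas hgL2
  have hgy : Measurable (g y) :=
    hgmeas.comp (measurable_const.prodMk measurable_id)
  have hsy : Measurable (fun p : E d × E d => σ y p.1 p.2) :=
    hσmeas.comp (measurable_const.prodMk measurable_id)
  have := dissip_aux (μ.restrict V) (fun v w => σ y v w) hsy
    (fun v w => hσnn y v w) C (fun v w => hC y v w) (g y) hgy hgL2 hy
  simpa only [Qop] using this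
end
end
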